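/- Let G be a group and F the free group on {x, y, z}. The subgroup of F generated by the set {x, y} ∪ {zⁱ x z⁻ⁱ : 1 ≤ i ≤ n} is free of rank n + 2 on those generators. -/

import Mathlib

open FreeGroup SemidirectProduct

/-- The shift equivalence on `Fin 2 × ℤ`. -/
def shiftEquiv' (k : ℤ) : Fin 2 × ℤ ≃ Fin 2 × ℤ :=
  (Equiv.refl (Fin 2)).prodCongr (Equiv.addLeft k)

lemma shiftEquiv'_zero : shiftEquiv' 0 = Equiv.refl _ := by
  ext p <;> simp [shiftEquiv']

lemma shiftEquiv'_add (k l : ℤ) :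
    (shiftEquiv' l).trans (shiftEquiv' k) = shiftEquiv' (k + l) := by
  ext p <;> simp [shiftEquiv', add_assoc, add_comm, add_left_comm]

/-- Shift automorphisms of the free group on `Fin 2 × ℤ`. -/
def shiftHom : Multiplicative ℤ →* MulAut (FreeGroup (Fin 2 × ℤ)) where
  toFun k := FreeGroup.freeGroupCongr (shiftEquiv' k.toAdd)
  map_one' := by
    show FreeGroup.freeGroupCongr (shiftEquiv' (0 : ℤ)) = 1
    rw [shiftEquiv'_zero, FreeGroup.freeGroupCongr_refl]
    rfl
  map_mul' k l := by
    show FreeGroup.freeGroupCongr (shiftEquiv' (k.toAdd + l.toAdd)) = _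
    rw [← shiftEquiv'_add, ← FreeGroup.freeGroupCongr_trans]
    rfl

/-- In the free group F on {x, y, z} (here `FreeGroup (Fin 3)` with
x = of 0, y = of 1, z = of 2), the elements x, y, z x z⁻¹, z² x z⁻², …, zⁿ x z⁻ⁿ
freely generate a free subgroup of rank n + 2: the homomorphism from the free
group of rank n + 2 sending the i-th basis element to the i-th listed element is
injective, and its range is the subgroup generated by those elements. -/
theorem free_subgroup_of_conjugates (n : ℕ) :
    let x : FreeGroup (Fin 3) := FreeGroup.of 0
    let y : FreeGroup (Fin 3) := FreeGroup.of 1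
    let z : FreeGroup (Fin 3) := FreeGroup.of 2
    let f : Fin (n + 2) → FreeGroup (Fin 3) := fun i =>
      if i.val = 0 then x
      else if i.val = 1 then y
      else z ^ (i.val - 1) * x * (z ^ (i.val - 1))⁻¹
    Function.Injective (FreeGroup.lift f) ∧
      (FreeGroup.lift f).range = Subgroup.closure (Set.range f) := by
  intro x y z f
  refine ⟨?_, FreeGroup.range_lift_eq_closure⟩
  set H := FreeGroup (Fin 2 × ℤ) ⋊[shiftHom] Multiplicative ℤ with hH
  set p : Fin 3 → H := fun i =>
    if i.val = 0 then inl (FreeGroup.of ((0 : Fin 2), (0 : ℤ)))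
    else if i.val = 1 then inl (FreeGroup.of ((1 : Fin 2), (0 : ℤ)))
    else inr (Multiplicative.ofAdd (1 : ℤ)) with hp
  set φ : FreeGroup (Fin 3) →* H := FreeGroup.lift p with hφ
  set g : Fin (n + 2) → Fin 2 × ℤ := fun i =>
    if i.val = 0 then ((0 : Fin 2), (0 : ℤ))
    else if i.val = 1 then ((1 : Fin 2), (0 : ℤ))
    else ((0 : Fin 2), ((i.val : ℤ) - 1)) with hg
  have hginj : Function.Injective g := by
    intro i j hij
    simp only [hg] at hij
    apply Fin.ext
    by_cases hi0 : i.val = 0 <;> by_cases hj0 : j.val = 0 <;>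
      by_cases hi1 : i.val = 1 <;> by_cases hj1 : j.val = 1 <;>
      simp_all [Prod.ext_iff, Fin.ext_iff, -Fin.val_eq_zero_iff] <;> omega
  have hkey : φ.comp (FreeGroup.lift f) =
      (inl : FreeGroup (Fin 2 × ℤ) →* H).comp (FreeGroup.map g) := by
    apply FreeGroup.ext_hom
    intro i
    simp only [MonoidHom.comp_apply, FreeGroup.lift_apply_of, FreeGroup.map.of]
    by_cases h0 : i.val = 0
    · simp [f, g, h0, x, φ, p, (Fin.ext h0 : i = 0)]
    by_cases h1 : i.val = 1
    · simp [f, g, h0, h1, y, φ, p, show ¬ i = 0 from fun h => h0 (by subst h; rfl)]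
    · have h2 : 2 ≤ i.val := by
        have := i.isLt
        omega
      simp only [f, g, h0, h1, if_neg, if_false]
      have hz : φ z = inr (Multiplicative.ofAdd (1 : ℤ)) := by simp [φ, z, p]
      have hx : φ x = inl (FreeGroup.of ((0 : Fin 2), (0 : ℤ))) := by simp [φ, x, p]
      have e1 : φ (z ^ (i.val - 1) * x * (z ^ (i.val - 1))⁻¹)
          = inr ((Multiplicative.ofAdd (1 : ℤ)) ^ (i.val - 1))
            * inl (FreeGroup.of ((0 : Fin 2), (0 : ℤ)))
            * (inr ((Multiplicative.ofAdd (1 : ℤ)) ^ (i.val - 1)))⁻¹ := by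
        rw [φ.map_mul, φ.map_mul, φ.map_inv, φ.map_pow, hz, hx,
          ← MonoidHom.map_pow]
      rw [e1, ← MonoidHom.map_inv, ← SemidirectProduct.inl_aut]
      congr 1
      have e2 : (Multiplicative.ofAdd (1 : ℤ)) ^ (i.val - 1)
          = Multiplicative.ofAdd ((i.val : ℤ) - 1) := by
        rw [← ofAdd_nsmul]
        congr 1
        rw [nsmul_eq_mul, mul_one]
        omega
      rw [e2]
      show FreeGroup.map (shiftEquiv' ((i.val : ℤ) - 1)) (FreeGroup.of _) = FreeGroup.of _
      rw [FreeGroup.map.of]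
      congr 1
      simp [shiftEquiv', Prod.map, Prod.ext_iff]
  have hmapinj : Function.Injective (FreeGroup.map g : FreeGroup (Fin (n+2)) →* _) := by
    obtain ⟨g', hg'⟩ := hginj.hasLeftInverse
    intro a b hab
    have h3 : FreeGroup.map g' (FreeGroup.map g a) = FreeGroup.map g' (FreeGroup.map g b) := by
      rw [hab]
    rwa [FreeGroup.map.comp, FreeGroup.map.comp,
      show g' ∘ g = id from funext hg', FreeGroup.map.id, FreeGroup.map.id] at h3
  have hcompinj : Function.Injective (φ.comp (FreeGroup.lift f)) := by
    rw [hkey]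
    exact inl_injective.comp hmapinj
  exact fun a b hab => hcompinj (by simp only [MonoidHom.comp_apply, hab])
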